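/- Let (ρ_k)_{k≥1} be positive real numbers with ρ_{k+1} ≥ 2ρ_k, and let (t_k)_{k≥1} be real numbers with |t_k − ρ_k| ≤ 0.2ρ_k for all k, such that 0.001 ≤ ∏_{k=1}^N (t_k/ρ_k) ≤ 1000 for every N ≥ 1. Then the infinite product m(z) = ∏_{k≥1} (1 − z/ρ_k)/(1 − z/t_k) converges locally uniformly on ℂ ∖ {t_k : k ≥ 1}, and there exist constants c, C > 0 such that for every k ≥ 1 and every z ∈ ℂ with (ρ_{k−1} + ρ_k)/2 ≤ |z| ≤ (ρ_k + ρ_{k+1})/2 (where ρ₀ := 0) and z ≠ t_k, one has c·|z − ρ_k|/|z − t_k| ≤ |m(z)| ≤ C·|z − ρ_k|/|z − t_k|. -/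

import Mathlib

open Filter Finset

lemma aux_factor {r τ : ℝ} (hr : r ≠ 0) (hτ : τ ≠ 0) {z : ℂ} (hz : z ≠ (τ:ℂ)) :
    (1 - z/(r:ℂ))/(1 - z/(τ:ℂ)) = ((τ:ℂ)/(r:ℂ)) * ((z - r)/(z - τ)) := by
  have h1 : (z - (τ:ℂ)) ≠ 0 := sub_ne_zero.mpr hz
  have h2 : ((τ:ℂ) - z) ≠ 0 := fun h => h1 (by rw [← neg_sub]; simp [h])
  have hr' : (r:ℂ) ≠ 0 := by exact_mod_cast hr
  have hτ' : (τ:ℂ) ≠ 0 := by exact_mod_cast hτ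
  have e1 : 1 - z/(r:ℂ) = ((r:ℂ) - z)/r := by field_simp
  have e2 : 1 - z/(τ:ℂ) = ((τ:ℂ) - z)/τ := by field_simp
  rw [e1, e2, div_div_div_comm]
  rw [show z - (r:ℂ) = -((r:ℂ) - z) by ring, show z - (τ:ℂ) = -((τ:ℂ) - z) by ring,
    neg_div_neg_eq]
  rw [div_div_eq_mul_div]
  ring

lemma aux_norm {r τ : ℝ} (hr : 0 < r) (hτ : 0 < τ) {z : ℂ} (hz : z ≠ (τ:ℂ)) :
    ‖(1 - z/(r:ℂ))/(1 - z/(τ:ℂ))‖ = (τ/r) * (‖z - (r:ℂ)‖/‖z - (τ:ℂ)‖) := by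
  rw [aux_factor hr.ne' hτ.ne' hz, norm_mul, norm_div, norm_div]
  rw [Complex.norm_real, Complex.norm_real, Real.norm_of_nonneg hτ.le,
    Real.norm_of_nonneg hr.le]

lemma aux_sub_one {r τ : ℝ} (hr : r ≠ 0) (hτ : τ ≠ 0) {z : ℂ} (hz : z ≠ (τ:ℂ)) :
    (1 - z/(r:ℂ))/(1 - z/(τ:ℂ)) - 1 = z * ((r:ℂ) - τ) / ((r:ℂ) * ((τ:ℂ) - z)) := by
  have h1 : (z - (τ:ℂ)) ≠ 0 := sub_ne_zero.mpr hz
  have h2 : ((τ:ℂ) - z) ≠ 0 := fun h => h1 (by rw [← neg_sub]; simp [h])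
  have hr' : (r:ℂ) ≠ 0 := by exact_mod_cast hr
  have hτ' : (τ:ℂ) ≠ 0 := by exact_mod_cast hτ
  rw [aux_factor hr hτ hz]
  field_simp
  ring

lemma aux_sub_one_norm {r τ : ℝ} (hr : 0 < r) (hτ : 0 < τ) {z : ℂ} (hz : z ≠ (τ:ℂ)) :
    ‖(1 - z/(r:ℂ))/(1 - z/(τ:ℂ)) - 1‖ = ‖z‖ * |r - τ| / (r * ‖z - (τ:ℂ)‖) := by
  rw [aux_sub_one hr.ne' hτ.ne' hz, norm_div, norm_mul, norm_mul]
  have e1 : ((r:ℂ) - τ) = ((r - τ : ℝ) : ℂ) := by push_cast; ring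
  have e2 : ‖(τ:ℂ) - z‖ = ‖z - (τ:ℂ)‖ := by rw [← norm_neg]; ring_nf
  rw [e1, Complex.norm_real, Real.norm_eq_abs, Complex.norm_real,
    Real.norm_of_nonneg hr.le, e2]

lemma norm_prod_le_one_add (s : Finset ℕ) (f : ℕ → ℂ) (u : ℕ → ℝ)
    (h : ∀ j ∈ s, ‖f j - 1‖ ≤ u j) : ‖∏ j ∈ s, f j‖ ≤ ∏ j ∈ s, (1 + u j) := by
  rw [norm_prod]
  refine Finset.prod_le_prod (fun j _ => norm_nonneg _) (fun j hj => ?_)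
  calc ‖f j‖ = ‖(f j - 1) + 1‖ := by ring_nf
    _ ≤ ‖f j - 1‖ + 1 := by simpa using norm_add_le (f j - 1) 1
    _ ≤ 1 + u j := by linarith [h j hj]

lemma norm_prod_sub_one_le (s : Finset ℕ) (f : ℕ → ℂ) (u : ℕ → ℝ)
    (h : ∀ j ∈ s, ‖f j - 1‖ ≤ u j) :
    ‖∏ j ∈ s, f j - 1‖ ≤ ∏ j ∈ s, (1 + u j) - 1 := by
  induction s using Finset.cons_induction with
  | empty => simp
  | cons a s ha ih =>
    rw [Finset.prod_cons, Finset.prod_cons]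
    have hu : ∀ j ∈ s, ‖f j - 1‖ ≤ u j := fun j hj => h j (Finset.mem_cons_of_mem hj)
    have ha' : ‖f a - 1‖ ≤ u a := h a (Finset.mem_cons_self a s)
    have hP : ‖∏ j ∈ s, f j‖ ≤ ∏ j ∈ s, (1 + u j) := norm_prod_le_one_add s f u hu
    have hua : 0 ≤ u a := le_trans (norm_nonneg _) ha'
    calc ‖f a * ∏ j ∈ s, f j - 1‖
        = ‖(f a - 1) * ∏ j ∈ s, f j + (∏ j ∈ s, f j - 1)‖ := by ring_nf
      _ ≤ ‖(f a - 1) * ∏ j ∈ s, f j‖ + ‖∏ j ∈ s, f j - 1‖ := norm_add_le _ _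
      _ ≤ u a * ∏ j ∈ s, (1 + u j) + (∏ j ∈ s, (1 + u j) - 1) := by
          rw [norm_mul]
          gcongr
          exact ih hu
      _ = (1 + u a) * ∏ j ∈ s, (1 + u j) - 1 := by ring

lemma prod_one_add_le_exp (s : Finset ℕ) (u : ℕ → ℝ) (hu : ∀ j ∈ s, 0 ≤ u j) :
    ∏ j ∈ s, (1 + u j) ≤ Real.exp (∑ j ∈ s, u j) := by
  rw [Real.exp_sum]
  refine Finset.prod_le_prod (fun j hj => by linarith [hu j hj]) (fun j hj => ?_)
  linarith [Real.add_one_le_exp (u j)]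

lemma exp_neg_two_le {x : ℝ} (h0 : 0 ≤ x) (h2 : x ≤ 1/2) :
    Real.exp (-(2*x)) ≤ 1 - x := by
  have h1 : (1 + x)^2 ≤ Real.exp (2*x) := by
    have := Real.add_one_le_exp x
    calc (1 + x)^2 = (x+1)*(x+1) := by ring
      _ ≤ Real.exp x * Real.exp x := by nlinarith [Real.add_one_le_exp x]
      _ = Real.exp (2*x) := by rw [← Real.exp_add]; ring_nf
  have hp : (0:ℝ) < (1+x)^2 := by positivity
  calc Real.exp (-(2*x)) = (Real.exp (2*x))⁻¹ := Real.exp_neg _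
    _ ≤ ((1+x)^2)⁻¹ := inv_anti₀ hp h1
    _ = 1/((1+x)^2) := (one_div _).symm
    _ ≤ 1 - x := by
        rw [div_le_iff₀ hp]
        have hx2 : x*x ≤ (1/2)*x := mul_le_mul_of_nonneg_right h2 h0
        have key : 0 ≤ x * (1 - x - x^2) := mul_nonneg h0 (by nlinarith)
        nlinarith

lemma prod_one_sub_ge (s : Finset ℕ) (δ : ℕ → ℝ)
    (h : ∀ j ∈ s, 0 ≤ δ j ∧ δ j ≤ 1/2) :
    Real.exp (-(2 * ∑ j ∈ s, δ j)) ≤ ∏ j ∈ s, (1 - δ j) := by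
  have e : Real.exp (-(2 * ∑ j ∈ s, δ j)) = ∏ j ∈ s, Real.exp (-(2 * δ j)) := by
    rw [← Real.exp_sum]
    congr 1
    rw [Finset.mul_sum, ← Finset.sum_neg_distrib]
  rw [e]
  refine Finset.prod_le_prod (fun j _ => (Real.exp_pos _).le) (fun j hj => ?_)
  exact exp_neg_two_le (h j hj).1 (h j hj).2

lemma sum_pow_half (s : Finset ℕ) (e : ℕ → ℕ) (he : Set.InjOn e s) :
    ∑ j ∈ s, ((1:ℝ)/2)^(e j) ≤ 2 := by
  rw [← Finset.sum_image (fun x hx y hy h => he hx hy h)]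
  obtain ⟨n, hn⟩ := (s.image e).exists_nat_subset_range
  calc ∑ i ∈ s.image e, ((1:ℝ)/2)^i ≤ ∑ i ∈ Finset.range n, ((1:ℝ)/2)^i := by
        refine Finset.sum_le_sum_of_subset_of_nonneg hn (fun i _ _ => by positivity)
    _ ≤ 2 := sum_geometric_two_le n

lemma uniformCauchy_prod (f : ℕ → ℂ → ℂ) (u : ℕ → ℝ) (S : Set ℂ)
    (h : ∀ j, 1 ≤ j → ∀ z ∈ S, ‖f j z - 1‖ ≤ u j) (hu : ∀ j, 0 ≤ u j)
    (hsum : Summable u) :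
    UniformCauchySeqOn (fun N z => ∏ j ∈ Finset.Icc 1 N, f j z) atTop S := by
  rw [Metric.uniformCauchySeqOn_iff]
  intro ε hε
  set T := ∑' j, u j with hTdef
  have hM : (0:ℝ) < Real.exp T := Real.exp_pos T
  set M := Real.exp T with hMdef
  have hc : ContinuousAt (fun x : ℝ => M * (Real.exp x - 1)) 0 := by fun_prop
  have h0 : (fun x : ℝ => M * (Real.exp x - 1)) 0 = 0 := by simp
  obtain ⟨δ, hδpos, hδ⟩ := Metric.continuousAt_iff.mp hc ε hε
  obtain ⟨s, hs⟩ := hsum.vanishing (Metric.ball_mem_nhds (0:ℝ) hδpos)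
  obtain ⟨m₀, hm₀⟩ := s.exists_nat_subset_range
  have key : ∀ m n, m₀ ≤ m → m ≤ n → ∀ z ∈ S,
      dist (∏ j ∈ Finset.Icc 1 m, f j z) (∏ j ∈ Finset.Icc 1 n, f j z) < ε := by
    intro m n hm hmn z hz
    have hIcc : ∀ k, Finset.Icc 1 k = Finset.Ioc 0 k := fun k => Finset.Icc_add_one_left_eq_Ioc 0 k
    have hsplit : (∏ j ∈ Finset.Icc 1 n, f j z) =
        (∏ j ∈ Finset.Icc 1 m, f j z) * ∏ j ∈ Finset.Ioc m n, f j z := by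
      rw [hIcc, hIcc, Finset.prod_Ioc_consecutive _ (Nat.zero_le m) hmn]
    have hb : ∀ j ∈ Finset.Ioc m n, ‖f j z - 1‖ ≤ u j := by
      intro j hj
      have : m < j := (Finset.mem_Ioc.mp hj).1
      exact h j (by omega) z hz
    have hb' : ∀ j ∈ Finset.Icc 1 m, ‖f j z - 1‖ ≤ u j := by
      intro j hj
      exact h j (Finset.mem_Icc.mp hj).1 z hz
    have hPm : ‖∏ j ∈ Finset.Icc 1 m, f j z‖ ≤ M := by
      calc ‖∏ j ∈ Finset.Icc 1 m, f j z‖ ≤ ∏ j ∈ Finset.Icc 1 m, (1 + u j) :=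
            norm_prod_le_one_add _ _ _ hb'
        _ ≤ Real.exp (∑ j ∈ Finset.Icc 1 m, u j) :=
            prod_one_add_le_exp _ _ (fun j _ => hu j)
        _ ≤ M := Real.exp_le_exp.mpr (Summable.sum_le_tsum _ (fun i _ => hu i) hsum)
    set s' := ∑ j ∈ Finset.Ioc m n, u j with hs'def
    have hs'0 : 0 ≤ s' := Finset.sum_nonneg (fun j _ => hu j)
    have hdisj : Disjoint (Finset.Ioc m n) s := by
      rw [Finset.disjoint_left]
      intro a ha has
      have h1 : m < a := (Finset.mem_Ioc.mp ha).1
      have h2 : a < m₀ := Finset.mem_range.mp (hm₀ has)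
      omega
    have hball := hs (Finset.Ioc m n) hdisj
    have hs'δ : dist s' 0 < δ := by
      rw [Real.dist_eq, sub_zero]
      exact (by simpa [Real.dist_eq] using Metric.mem_ball.mp hball)
    have hfin : M * (Real.exp s' - 1) < ε := by
      have h2 := hδ hs'δ
      rw [show M * (Real.exp 0 - 1) = 0 by simp, Real.dist_eq, sub_zero, abs_of_nonneg] at h2
      · exact h2
      · have := Real.one_le_exp hs'0
        nlinarith
    have hQ : ‖∏ j ∈ Finset.Ioc m n, f j z - 1‖ ≤ Real.exp s' - 1 := by
      calc ‖∏ j ∈ Finset.Ioc m n, f j z - 1‖ ≤ ∏ j ∈ Finset.Ioc m n, (1 + u j) - 1 :=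
            norm_prod_sub_one_le _ _ _ hb
        _ ≤ Real.exp s' - 1 := by
            have := prod_one_add_le_exp (Finset.Ioc m n) u (fun j _ => hu j)
            linarith
    calc dist (∏ j ∈ Finset.Icc 1 m, f j z) (∏ j ∈ Finset.Icc 1 n, f j z)
        = ‖(∏ j ∈ Finset.Icc 1 m, f j z) - (∏ j ∈ Finset.Icc 1 n, f j z)‖ :=
          dist_eq_norm _ _
      _ = ‖∏ j ∈ Finset.Icc 1 m, f j z‖ * ‖∏ j ∈ Finset.Ioc m n, f j z - 1‖ := by
          rw [hsplit]
          rw [show (∏ j ∈ Finset.Icc 1 m, f j z) -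
              (∏ j ∈ Finset.Icc 1 m, f j z) * ∏ j ∈ Finset.Ioc m n, f j z =
              (∏ j ∈ Finset.Icc 1 m, f j z) * -((∏ j ∈ Finset.Ioc m n, f j z) - 1) by ring]
          rw [norm_mul, norm_neg]
      _ ≤ M * (Real.exp s' - 1) := by
          have h1 : (0:ℝ) ≤ Real.exp s' - 1 := by
            have := Real.one_le_exp hs'0
            linarith
          exact mul_le_mul hPm hQ (norm_nonneg _) hM.le
      _ < ε := hfin
  refine ⟨m₀, fun m hm n hn z hz => ?_⟩
  rcases le_total m n with hmn | hmn
  · exact key m n hm hmn z hz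
  · rw [dist_comm]; exact key n m hn hmn z hz

set_option maxHeartbeats 2000000 in
theorem stmt2 (ρ t : ℕ → ℝ) (hρ0 : ρ 0 = 0)
    (hρpos : ∀ k ≥ 1, 0 < ρ k)
    (hρlac : ∀ k ≥ 1, 2 * ρ k ≤ ρ (k + 1))
    (ht : ∀ k ≥ 1, |t k - ρ k| ≤ 0.2 * ρ k)
    (hprod : ∀ N ≥ 1, (0.001 : ℝ) ≤ ∏ k ∈ Finset.Icc 1 N, t k / ρ k ∧
      ∏ k ∈ Finset.Icc 1 N, t k / ρ k ≤ 1000) :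
    ∃ m : ℂ → ℂ,
      TendstoLocallyUniformlyOn
        (fun N : ℕ => fun z : ℂ =>
          ∏ k ∈ Finset.Icc 1 N, (1 - z / (ρ k : ℂ)) / (1 - z / (t k : ℂ)))
        m atTop {z : ℂ | ∀ k ≥ 1, z ≠ (t k : ℂ)} ∧
      ∃ c > (0:ℝ), ∃ C > (0:ℝ), ∀ k ≥ 1, ∀ z : ℂ,
        (ρ (k - 1) + ρ k) / 2 ≤ ‖z‖ → ‖z‖ ≤ (ρ k + ρ (k + 1)) / 2 → z ≠ (t k : ℂ) →
          c * (‖z - (ρ k : ℂ)‖ / ‖z - (t k : ℂ)‖) ≤ ‖m z‖ ∧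
          ‖m z‖ ≤ C * (‖z - (ρ k : ℂ)‖ / ‖z - (t k : ℂ)‖) := by
  have htlb : ∀ k ≥ 1, 0.8 * ρ k ≤ t k := by
    intro k hk
    have h1 := (abs_le.mp (ht k hk)).1
    nlinarith [hρpos k hk]
  have htub : ∀ k ≥ 1, t k ≤ 1.2 * ρ k := by
    intro k hk
    have h1 := (abs_le.mp (ht k hk)).2
    nlinarith [hρpos k hk]
  have htpos : ∀ k ≥ 1, 0 < t k := by
    intro k hk
    have := htlb k hk; nlinarith [hρpos k hk]
  have hgrow : ∀ i ≥ 1, ∀ j, i ≤ j → 2^(j-i) * ρ i ≤ ρ j := by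
    intro i hi j hij
    induction j, hij using Nat.le_induction with
    | base => simp
    | succ j hj ih =>
      have h1 := hρlac j (le_trans hi hj)
      have h2 : (2:ℝ)^(j+1-i) = 2 * 2^(j-i) := by
        rw [← pow_succ']
        congr 1
        omega
      rw [h2]
      nlinarith [hρpos i hi, pow_pos (by norm_num : (0:ℝ) < 2) (j-i)]
  set U := {z : ℂ | ∀ k ≥ 1, z ≠ (t k : ℂ)} with hU
  set P : ℕ → ℂ → ℂ :=
    fun N z => ∏ k ∈ Finset.Icc 1 N, (1 - z / (ρ k : ℂ)) / (1 - z / (t k : ℂ)) with hPdef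
  set m : ℂ → ℂ := fun z => limUnder atTop (fun N => P N z) with hm
  have key : ∀ x ∈ U, ∃ S ∈ nhdsWithin x U, TendstoUniformlyOn P m atTop S := by
    intro x hx
    set R := ‖x‖ + 1 with hR
    have hRpos : 0 < R := by positivity
    -- choose K with 10 R ≤ ρ K
    obtain ⟨n, hn⟩ := pow_unbounded_of_one_lt (10 * R / ρ 1) (by norm_num : (1:ℝ) < 2)
    set K := n + 1 with hK
    have hK1 : 1 ≤ K := Nat.le_add_left 1 n
    have hρ1 : 0 < ρ 1 := hρpos 1 le_rfl
    have hρK : 10 * R ≤ ρ K := by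
      have hg := hgrow 1 le_rfl K (by omega)
      have : K - 1 = n := by omega
      rw [this] at hg
      have := (div_lt_iff₀ hρ1).mp hn
      nlinarith
    -- radius
    have hne : (Finset.Icc 1 K).Nonempty := ⟨1, by simp [hK1]⟩
    set d := (Finset.Icc 1 K).inf' hne (fun j => ‖x - (t j : ℂ)‖) with hd
    have hdpos : 0 < d := by
      rw [hd, Finset.lt_inf'_iff]
      intro j hj
      have hj1 : 1 ≤ j := (Finset.mem_Icc.mp hj).1
      have := hx j hj1
      rw [norm_pos_iff, sub_ne_zero]
      exact this
    set r := min 1 (d / 2) with hr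
    have hrpos : 0 < r := by
      rw [hr]
      exact lt_min one_pos (by linarith)
    refine ⟨Metric.closedBall x r ∩ U, ?_, ?_⟩
    · exact Filter.inter_mem (mem_nhdsWithin_of_mem_nhds (Metric.closedBall_mem_nhds x hrpos))
        self_mem_nhdsWithin
    -- uniform bounds
    set M : ℝ := max (0.2 * R / r) 1 with hM
    have hMpos : 0 < M := lt_of_lt_of_le one_pos (le_max_right _ _)
    set w : ℕ → ℝ := fun j => M * (1/2)^(j - K) with hw
    have hwpos : ∀ j, 0 ≤ w j := fun j => by positivity
    have hwsum : Summable w := by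
      apply Summable.mul_left
      rw [← summable_nat_add_iff K]
      have : (fun n_1 => ((1:ℝ)/2) ^ (n_1 + K - K)) = fun n_1 => ((1:ℝ)/2)^n_1 := by
        funext q; congr 1; omega
      rw [this]
      exact summable_geometric_two
    have hbound : ∀ j, 1 ≤ j → ∀ z ∈ Metric.closedBall x r ∩ U,
        ‖(1 - z / (ρ j : ℂ)) / (1 - z / (t j : ℂ)) - 1‖ ≤ w j := by
      intro j hj z hz
      obtain ⟨hz1, hz2⟩ := hz
      have hzR : ‖z‖ ≤ R := by
        have := Metric.mem_closedBall.mp hz1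
        have h2 : ‖z - x‖ ≤ r := by rwa [dist_eq_norm] at this
        have h3 : ‖z‖ ≤ ‖z - x‖ + ‖x‖ := by
          simpa using norm_add_le (z - x) x
        have : r ≤ 1 := min_le_left _ _
        rw [hR]; linarith
      have hρj := hρpos j hj
      have htj := htpos j hj
      have hzt : z ≠ (t j : ℂ) := hz2 j hj
      rw [aux_sub_one_norm hρj htj hzt]
      have habs : |ρ j - t j| ≤ 0.2 * ρ j := by
        rw [abs_sub_comm]; exact ht j hj
      rcases le_or_gt j K with hjK | hjK
      · -- near factors
        have hdist : r ≤ ‖z - (t j : ℂ)‖ := by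
          have h1 : d ≤ ‖x - (t j : ℂ)‖ :=
            Finset.inf'_le _ (Finset.mem_Icc.mpr ⟨hj, hjK⟩)
          have h2 : ‖x - (t j : ℂ)‖ ≤ ‖x - z‖ + ‖z - (t j : ℂ)‖ := by
            simpa using norm_add_le (x - z) (z - (t j : ℂ))
          have h3 : ‖x - z‖ ≤ r := by
            have := Metric.mem_closedBall.mp hz1
            rw [dist_eq_norm, ← norm_neg] at this
            simpa using this
          have h4 : r ≤ d / 2 := min_le_right _ _
          linarith
        have hwj : 0.2 * R / r ≤ w j := by
          rw [hw]
          have : j - K = 0 := by omega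
          simp only [this, pow_zero, mul_one]
          exact le_max_left _ _
        have hztpos : 0 < ‖z - (t j : ℂ)‖ := lt_of_lt_of_le hrpos hdist
        have h5 : ‖z‖ * |ρ j - t j| / (ρ j * ‖z - (t j : ℂ)‖) ≤ 0.2 * R / r := by
          rw [div_le_div_iff₀ (mul_pos hρj hztpos) hrpos]
          have h6 : ‖z‖ * |ρ j - t j| ≤ R * (0.2 * ρ j) :=
            mul_le_mul hzR habs (abs_nonneg _) hRpos.le
          calc ‖z‖ * |ρ j - t j| * r
              ≤ (R * (0.2 * ρ j)) * ‖z - (t j : ℂ)‖ :=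
                mul_le_mul h6 hdist hrpos.le (by positivity)
            _ = 0.2 * R * (ρ j * ‖z - (t j : ℂ)‖) := by ring
        linarith
      · -- far factors
        have hgj : 2^(j-K) * ρ K ≤ ρ j := hgrow K hK1 j hjK.le
        have hpow : (1:ℝ) ≤ 2^(j-K) := one_le_pow₀ (by norm_num)
        have htjb : 8 * 2^(j-K) * R ≤ t j := by
          have := htlb j hj
          nlinarith
        have hdist : 7 * 2^(j-K) * R ≤ ‖z - (t j : ℂ)‖ := by
          have h1 : ‖(t j : ℂ)‖ - ‖z‖ ≤ ‖z - (t j : ℂ)‖ := by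
            rw [← norm_neg (z - (t j : ℂ))]
            simpa using norm_sub_norm_le ((t j : ℂ)) z
          rw [Complex.norm_real, Real.norm_of_nonneg (htpos j hj).le] at h1
          nlinarith
        have hwj : (1:ℝ) * (1/2)^(j-K) ≤ w j := by
          show (1:ℝ) * (1/2)^(j-K) ≤ M * (1/2)^(j-K)
          gcongr
          exact le_max_right _ _
        have hztpos : 0 < ‖z - (t j : ℂ)‖ := by
          have : (0:ℝ) < 7 * 2^(j-K) * R := by positivity
          linarith
        have h5 : ‖z‖ * |ρ j - t j| / (ρ j * ‖z - (t j : ℂ)‖) ≤ (1:ℝ) * (1/2)^(j-K) := by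
          rw [div_le_iff₀ (mul_pos hρj hztpos)]
          have he : (2:ℝ)^(j-K) * (1/2)^(j-K) = 1 := by
            rw [← mul_pow]; norm_num
          have h6 : ‖z‖ * |ρ j - t j| ≤ R * (0.2 * ρ j) :=
            mul_le_mul hzR habs (abs_nonneg _) hRpos.le
          have h7 : ρ j * (7 * 2^(j-K) * R) ≤ ρ j * ‖z - (t j : ℂ)‖ := by
            exact mul_le_mul_of_nonneg_left hdist hρj.le
          calc ‖z‖ * |ρ j - t j| ≤ R * (0.2 * ρ j) := h6
            _ = (1 * (1/2)^(j-K)) * (ρ j * (2^(j-K) * (0.2 * R))) := by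
                have he2 : ((1:ℝ)/2)^(j-K) * 2^(j-K) = 1 := by rw [← mul_pow]; norm_num
                calc R * (0.2*ρ j) = (((1:ℝ)/2)^(j-K) * 2^(j-K)) * (R * (0.2 * ρ j)) := by
                      rw [he2, one_mul]
                  _ = (1 * (1/2)^(j-K)) * (ρ j * (2^(j-K) * (0.2 * R))) := by ring
            _ ≤ (1 * (1/2)^(j-K)) * (ρ j * ‖z - (t j : ℂ)‖) := by
                gcongr
                nlinarith [hdist, hpow, hRpos]
        linarith
    have hcauchy : UniformCauchySeqOn P atTop (Metric.closedBall x r ∩ U) :=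
      uniformCauchy_prod _ w _ hbound hwpos hwsum
    apply hcauchy.tendstoUniformlyOn_of_tendsto
    intro z hz
    exact (hcauchy.cauchySeq hz).tendsto_limUnder
  have hconv : TendstoLocallyUniformlyOn P m atTop U := by
    intro u hu x hx
    obtain ⟨S, hS, hT⟩ := key x hx
    exact ⟨S, hS, hT u hu⟩
  have hmono : ∀ i ≥ 1, ∀ j, i ≤ j → ρ i ≤ ρ j := by
    intro i hi j hij
    have h1 := hgrow i hi j hij
    have h2 : (1:ℝ) ≤ 2^(j-i) := one_le_pow₀ (by norm_num)
    nlinarith [hρpos i hi]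
  refine ⟨m, hconv, 0.001 * Real.exp (-(4/3:ℝ)) * 0.1 * 0.8 * 0.1 * Real.exp (-(1.44:ℝ)),
    by positivity, 1000 * Real.exp ((2/3:ℝ)) * 2 * 1.2 * 42 * Real.exp ((0.72:ℝ)),
    by positivity, ?_⟩
  intro k hk z hz1 hz2 hzt
  -- ===== quantitative bounds =====
  have hρk : 0 < ρ k := hρpos k hk
  have hρk1 : 0 < ρ (k+1) := hρpos (k+1) (by omega)
  have htk : 0 < t k := htpos k hk
  have hlack : 2 * ρ k ≤ ρ (k+1) := hρlac k hk
  have hzub : ‖z‖ ≤ 0.75 * ρ (k+1) := by nlinarith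
  have hz15 : 2 ≤ k → 1.5 * ρ (k-1) ≤ ‖z‖ := by
    intro hk2
    have he : (k-1)+1 = k := by omega
    have h1 := hρlac (k-1) (by omega)
    rw [he] at h1
    have h0 : 0 < ρ (k-1) := hρpos (k-1) (by omega)
    nlinarith
  have hge : ∀ c : ℝ, 0 ≤ c → c - ‖z‖ ≤ ‖z - (c:ℂ)‖ := by
    intro c hc
    have h1 := norm_sub_norm_le ((c:ℂ)) z
    rw [Complex.norm_real, Real.norm_of_nonneg hc, norm_sub_rev] at h1
    exact h1
  have hge2 : ∀ c : ℝ, 0 ≤ c → ‖z‖ - c ≤ ‖z - (c:ℂ)‖ := by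
    intro c hc
    have h1 := norm_sub_norm_le z ((c:ℂ))
    rwa [Complex.norm_real, Real.norm_of_nonneg hc] at h1
  have hle : ∀ c : ℝ, 0 ≤ c → ‖z - (c:ℂ)‖ ≤ ‖z‖ + c := by
    intro c hc
    have h1 := norm_sub_le z ((c:ℂ))
    rwa [Complex.norm_real, Real.norm_of_nonneg hc] at h1
  have htri : ∀ c d : ℝ, ‖z - (c:ℂ)‖ ≤ ‖z - (d:ℂ)‖ + |d - c| := by
    intro c d
    calc ‖z - (c:ℂ)‖ = ‖(z - (d:ℂ)) + ((d:ℂ) - (c:ℂ))‖ := by ring_nf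
      _ ≤ ‖z - (d:ℂ)‖ + ‖(d:ℂ) - (c:ℂ)‖ := norm_add_le _ _
      _ = ‖z - (d:ℂ)‖ + |d - c| := by
          congr 1
          rw [show ((d:ℂ) - (c:ℂ)) = ((d - c:ℝ):ℂ) by push_cast; ring, Complex.norm_real,
            Real.norm_eq_abs]
  have hnorm_ne : ∀ τ : ℝ, 0 < τ → ‖z‖ ≠ τ → z ≠ (τ:ℂ) := by
    intro τ h0 hne heq
    apply hne
    rw [heq, Complex.norm_real, Real.norm_of_nonneg h0.le]
  have hzU : z ∈ U := by
    intro j hj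
    rcases lt_trichotomy j k with hjk | hjk | hjk
    · have hk2 : 2 ≤ k := by omega
      have h1 : t j ≤ 1.2 * ρ j := htub j hj
      have h2 : ρ j ≤ ρ (k-1) := hmono j hj (k-1) (by omega)
      have h3 := hz15 hk2
      have h4 : 0 < ρ (k-1) := hρpos (k-1) (by omega)
      exact hnorm_ne (t j) (htpos j hj) (ne_of_gt (by nlinarith))
    · exact hjk ▸ hzt
    · have h1 : 0.8 * ρ j ≤ t j := htlb j hj
      have h2 : ρ (k+1) ≤ ρ j := hmono (k+1) (by omega) j (by omega)
      exact hnorm_ne (t j) (htpos j hj) (ne_of_lt (by nlinarith))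
  set a : ℕ → ℂ := fun j => (1 - z/(ρ j:ℂ))/(1 - z/(t j:ℂ)) with ha
  have hPbound : ∀ N, k+1 ≤ N →
      0.001 * Real.exp (-(4/3:ℝ)) * 0.1 * 0.8 * 0.1 * Real.exp (-(1.44:ℝ)) *
        (‖z - (ρ k:ℂ)‖ / ‖z - (t k:ℂ)‖) ≤ ‖P N z‖ ∧
      ‖P N z‖ ≤ 1000 * Real.exp ((2/3:ℝ)) * 2 * 1.2 * 42 * Real.exp ((0.72:ℝ)) *
        (‖z - (ρ k:ℂ)‖ / ‖z - (t k:ℂ)‖) := by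
    intro N hN
    have hPNz : P N z = ∏ j ∈ Finset.Icc 1 N, a j := rfl
    have hsplit : (∏ j ∈ Finset.Icc 1 N, a j) =
        ((((∏ j ∈ Finset.Ioc 0 (k-2), a j) * (∏ j ∈ Finset.Ioc (k-2) (k-1), a j)) *
          (∏ j ∈ Finset.Ioc (k-1) k, a j)) * (∏ j ∈ Finset.Ioc k (k+1), a j)) *
          (∏ j ∈ Finset.Ioc (k+1) N, a j) := by
      rw [show Finset.Icc 1 N = Finset.Ioc 0 N from Finset.Icc_add_one_left_eq_Ioc 0 N,
        ← Finset.prod_Ioc_consecutive a (Nat.zero_le (k+1)) hN,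
        ← Finset.prod_Ioc_consecutive a (Nat.zero_le k) (Nat.le_succ k),
        ← Finset.prod_Ioc_consecutive a (Nat.zero_le (k-1)) (by omega : k-1 ≤ k),
        ← Finset.prod_Ioc_consecutive a (Nat.zero_le (k-2)) (by omega : k-2 ≤ k-1)]
    have hGA : 0.001 * Real.exp (-(4/3:ℝ)) ≤ ‖∏ j ∈ Finset.Ioc 0 (k-2), a j‖ ∧
        ‖∏ j ∈ Finset.Ioc 0 (k-2), a j‖ ≤ 1000 * Real.exp ((2/3:ℝ)) := by
      have hfact : ∀ j ∈ Finset.Ioc 0 (k-2),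
          0 < ρ j ∧ 0 < t j ∧ 0.3 * 2^(k-1-j) * ρ j ≤ ‖z - (t j:ℂ)‖ := by
        intro j hj
        obtain ⟨hj0, hjk⟩ := Finset.mem_Ioc.mp hj
        have hj1 : 1 ≤ j := hj0
        have hρj := hρpos j hj1
        have h2 : 2^(k-1-j) * ρ j ≤ ρ (k-1) := hgrow j hj1 (k-1) (by omega)
        have h3 := hz15 (by omega)
        have h4 := htub j hj1
        have h5 := hge2 (t j) (htpos j hj1).le
        have hpw : (1:ℝ) ≤ 2^(k-1-j) := one_le_pow₀ (by norm_num)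
        refine ⟨hρj, htpos j hj1, ?_⟩
        nlinarith [mul_nonneg (sub_nonneg.mpr hpw) hρj.le]
      have hδsplit : ∀ j ∈ Finset.Ioc 0 (k-2),
          ‖a j‖ = (t j / ρ j) * (‖z - (ρ j:ℂ)‖ / ‖z - (t j:ℂ)‖) := by
        intro j hj
        obtain ⟨hρj, htj, hY⟩ := hfact j hj
        exact aux_norm hρj htj (hzU j (Finset.mem_Ioc.mp hj).1)
      have hprodsplit : ‖∏ j ∈ Finset.Ioc 0 (k-2), a j‖ =
          (∏ j ∈ Finset.Ioc 0 (k-2), (t j / ρ j)) *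
          (∏ j ∈ Finset.Ioc 0 (k-2), (‖z - (ρ j:ℂ)‖ / ‖z - (t j:ℂ)‖)) := by
        rw [norm_prod, ← Finset.prod_mul_distrib]
        exact Finset.prod_congr rfl hδsplit
      have hQ : 0.001 ≤ (∏ j ∈ Finset.Ioc 0 (k-2), (t j / ρ j)) ∧
          (∏ j ∈ Finset.Ioc 0 (k-2), (t j / ρ j)) ≤ 1000 := by
        rcases Nat.lt_or_ge (k-2) 1 with h | h
        · have h0 : k - 2 = 0 := by omega
          rw [h0]
          norm_num
        · have h1 := hprod (k-2) h
          rwa [show Finset.Icc 1 (k-2) = Finset.Ioc 0 (k-2) from Finset.Icc_add_one_left_eq_Ioc 0 (k-2)]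
            at h1
      have hδb : ∀ j ∈ Finset.Ioc 0 (k-2),
          0 ≤ 0.2 * ρ j / ‖z - (t j:ℂ)‖ ∧
          0.2 * ρ j / ‖z - (t j:ℂ)‖ ≤ (1/3) * (1/2)^(k-2-j) := by
        intro j hj
        obtain ⟨hρj, htj, hY⟩ := hfact j hj
        obtain ⟨hj0, hjk⟩ := Finset.mem_Ioc.mp hj
        have hYpos : 0 < ‖z - (t j:ℂ)‖ := lt_of_lt_of_le (by positivity) hY
        refine ⟨by positivity, ?_⟩
        rw [div_le_iff₀ hYpos]
        have hpow2 : ((1:ℝ)/2)^(k-2-j) * 2^(k-1-j) = 2 := by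
          rw [show k-1-j = (k-2-j)+1 from by omega, pow_succ, ← mul_assoc, ← mul_pow]
          norm_num
        calc 0.2 * ρ j = (1/3) * (1/2)^(k-2-j) * (0.3 * 2^(k-1-j) * ρ j) := by
              nlinarith [hpow2, hρj]
          _ ≤ (1/3) * (1/2)^(k-2-j) * ‖z - (t j:ℂ)‖ := by
              apply mul_le_mul_of_nonneg_left hY (by positivity)
      have hratio : ∀ j ∈ Finset.Ioc 0 (k-2),
          1 - 0.2 * ρ j / ‖z - (t j:ℂ)‖ ≤ ‖z - (ρ j:ℂ)‖ / ‖z - (t j:ℂ)‖ ∧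
          ‖z - (ρ j:ℂ)‖ / ‖z - (t j:ℂ)‖ ≤ 1 + 0.2 * ρ j / ‖z - (t j:ℂ)‖ := by
        intro j hj
        obtain ⟨hρj, htj, hY⟩ := hfact j hj
        have hj1 : 1 ≤ j := (Finset.mem_Ioc.mp hj).1
        have hYpos : 0 < ‖z - (t j:ℂ)‖ := lt_of_lt_of_le (by positivity) hY
        have habs := ht j hj1
        have h1 := htri (ρ j) (t j)
        have h2 := htri (t j) (ρ j)
        have habs2 : |ρ j - t j| ≤ 0.2 * ρ j := by rwa [abs_sub_comm]
        constructor
        · rw [le_div_iff₀ hYpos]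
          have he : (1 - 0.2 * ρ j / ‖z - (t j:ℂ)‖) * ‖z - (t j:ℂ)‖ =
              ‖z - (t j:ℂ)‖ - 0.2 * ρ j := by
            rw [sub_mul, one_mul, div_mul_cancel₀ _ hYpos.ne']
          rw [he]
          linarith
        · rw [div_le_iff₀ hYpos]
          have he : (1 + 0.2 * ρ j / ‖z - (t j:ℂ)‖) * ‖z - (t j:ℂ)‖ =
              ‖z - (t j:ℂ)‖ + 0.2 * ρ j := by
            rw [add_mul, one_mul, div_mul_cancel₀ _ hYpos.ne']
          rw [he]
          linarith
      have hsumδ : ∑ j ∈ Finset.Ioc 0 (k-2), 0.2 * ρ j / ‖z - (t j:ℂ)‖ ≤ 2/3 := by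
        calc ∑ j ∈ Finset.Ioc 0 (k-2), 0.2 * ρ j / ‖z - (t j:ℂ)‖
            ≤ ∑ j ∈ Finset.Ioc 0 (k-2), (1/3) * (1/2:ℝ)^(k-2-j) :=
              Finset.sum_le_sum (fun j hj => (hδb j hj).2)
          _ = (1/3) * ∑ j ∈ Finset.Ioc 0 (k-2), (1/2:ℝ)^(k-2-j) := by
              rw [Finset.mul_sum]
          _ ≤ (1/3) * 2 := by
              apply mul_le_mul_of_nonneg_left _ (by norm_num)
              exact sum_pow_half _ _ (fun x hx y hy hxy => by
                simp only [Finset.coe_Ioc, Set.mem_Ioc] at hx hy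
                omega)
          _ = 2/3 := by norm_num
      have hδhalf : ∀ j ∈ Finset.Ioc 0 (k-2),
          0 ≤ 0.2 * ρ j / ‖z - (t j:ℂ)‖ ∧ 0.2 * ρ j / ‖z - (t j:ℂ)‖ ≤ 1/2 := by
        intro j hj
        have h := hδb j hj
        have hp : ((1:ℝ)/2)^(k-2-j) ≤ 1 := pow_le_one₀ (by norm_num) (by norm_num)
        exact ⟨h.1, by nlinarith [h.2]⟩
      have hrlow : Real.exp (-(4/3:ℝ)) ≤
          ∏ j ∈ Finset.Ioc 0 (k-2), (‖z - (ρ j:ℂ)‖ / ‖z - (t j:ℂ)‖) := by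
        calc Real.exp (-(4/3:ℝ))
            ≤ Real.exp (-(2 * ∑ j ∈ Finset.Ioc 0 (k-2), 0.2 * ρ j / ‖z - (t j:ℂ)‖)) := by
              apply Real.exp_le_exp.mpr
              linarith
          _ ≤ ∏ j ∈ Finset.Ioc 0 (k-2), (1 - 0.2 * ρ j / ‖z - (t j:ℂ)‖) :=
              prod_one_sub_ge _ _ hδhalf
          _ ≤ ∏ j ∈ Finset.Ioc 0 (k-2), (‖z - (ρ j:ℂ)‖ / ‖z - (t j:ℂ)‖) :=
              Finset.prod_le_prod (fun j hj => by linarith [(hδhalf j hj).2])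
                (fun j hj => (hratio j hj).1)
      have hrup : ∏ j ∈ Finset.Ioc 0 (k-2), (‖z - (ρ j:ℂ)‖ / ‖z - (t j:ℂ)‖) ≤
          Real.exp ((2/3:ℝ)) := by
        calc ∏ j ∈ Finset.Ioc 0 (k-2), (‖z - (ρ j:ℂ)‖ / ‖z - (t j:ℂ)‖)
            ≤ ∏ j ∈ Finset.Ioc 0 (k-2), (1 + 0.2 * ρ j / ‖z - (t j:ℂ)‖) :=
              Finset.prod_le_prod (fun j hj => by positivity)
                (fun j hj => (hratio j hj).2)
          _ ≤ Real.exp (∑ j ∈ Finset.Ioc 0 (k-2), 0.2 * ρ j / ‖z - (t j:ℂ)‖) :=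
              prod_one_add_le_exp _ _ (fun j hj => (hδb j hj).1)
          _ ≤ Real.exp ((2/3:ℝ)) := Real.exp_le_exp.mpr hsumδ
      have hQ0 : (0:ℝ) ≤ ∏ j ∈ Finset.Ioc 0 (k-2), (t j / ρ j) := by linarith [hQ.1]
      have hr0 : (0:ℝ) ≤ ∏ j ∈ Finset.Ioc 0 (k-2), (‖z - (ρ j:ℂ)‖ / ‖z - (t j:ℂ)‖) :=
        Finset.prod_nonneg (fun j hj => by positivity)
      constructor
      · rw [hprodsplit]
        exact mul_le_mul hQ.1 hrlow (Real.exp_pos _).le hQ0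
      · rw [hprodsplit]
        exact mul_le_mul hQ.2 hrup hr0 (by norm_num)

    have hGB : 0.1 ≤ ‖∏ j ∈ Finset.Ioc (k-2) (k-1), a j‖ ∧
        ‖∏ j ∈ Finset.Ioc (k-2) (k-1), a j‖ ≤ 2 := by
      rcases Nat.lt_or_ge k 2 with hk2 | hk2
      · have h1 : k - 1 = 0 := by omega
        have h2 : k - 2 = 0 := by omega
        rw [h1, h2]
        norm_num
      · have hsing : Finset.Ioc (k-2) (k-1) = {k-1} := by
          ext x
          simp only [Finset.mem_Ioc, Finset.mem_singleton]
          omega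
        rw [hsing, Finset.prod_singleton]
        have hj1 : 1 ≤ k - 1 := by omega
        have hρj : 0 < ρ (k-1) := hρpos (k-1) hj1
        have htj : 0 < t (k-1) := htpos (k-1) hj1
        have htl := htlb (k-1) hj1
        have htu := htub (k-1) hj1
        have habs := ht (k-1) hj1
        have h15 : 1.5 * ρ (k-1) ≤ ‖z‖ := hz15 hk2
        have hYub : ‖z - (t (k-1):ℂ)‖ ≤ ‖z‖ + 1.2 * ρ (k-1) :=
          le_trans (hle (t (k-1)) htj.le) (by linarith)
        have hYlb : 0.3 * ρ (k-1) ≤ ‖z - (t (k-1):ℂ)‖ :=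
          le_trans (by linarith) (hge2 (t (k-1)) htj.le)
        have hYpos : 0 < ‖z - (t (k-1):ℂ)‖ := by nlinarith
        have hXlb : ‖z‖ - ρ (k-1) ≤ ‖z - (ρ (k-1):ℂ)‖ := hge2 (ρ (k-1)) hρj.le
        have hXub : ‖z - (ρ (k-1):ℂ)‖ ≤ ‖z - (t (k-1):ℂ)‖ + 0.2 * ρ (k-1) := by
          have h3 := htri (ρ (k-1)) (t (k-1))
          linarith
        have hak : ‖a (k-1)‖ =
            (t (k-1) / ρ (k-1)) * (‖z - (ρ (k-1):ℂ)‖ / ‖z - (t (k-1):ℂ)‖) :=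
          aux_norm hρj htj (hzU (k-1) hj1)
        rw [hak]
        have htρl : (0.8:ℝ) ≤ t (k-1) / ρ (k-1) := by rw [le_div_iff₀ hρj]; linarith
        have htρu : t (k-1) / ρ (k-1) ≤ 1.2 := by rw [div_le_iff₀ hρj]; linarith
        constructor
        · have hr : (5/27:ℝ) ≤ ‖z - (ρ (k-1):ℂ)‖ / ‖z - (t (k-1):ℂ)‖ := by
            rw [le_div_iff₀ hYpos]
            nlinarith
          have := mul_le_mul htρl hr (by norm_num) (le_trans (by norm_num) htρl)
          linarith
        · have hr : ‖z - (ρ (k-1):ℂ)‖ / ‖z - (t (k-1):ℂ)‖ ≤ 5/3 := by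
            rw [div_le_iff₀ hYpos]
            nlinarith
          have := mul_le_mul htρu hr (by positivity) (by norm_num)
          linarith
    have hGC : 0.8 * (‖z - (ρ k:ℂ)‖ / ‖z - (t k:ℂ)‖) ≤ ‖∏ j ∈ Finset.Ioc (k-1) k, a j‖ ∧
        ‖∏ j ∈ Finset.Ioc (k-1) k, a j‖ ≤ 1.2 * (‖z - (ρ k:ℂ)‖ / ‖z - (t k:ℂ)‖) := by
      have hsingC : Finset.Ioc (k-1) k = {k} := by
        ext x
        simp only [Finset.mem_Ioc, Finset.mem_singleton]
        omega
      rw [hsingC, Finset.prod_singleton]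
      have hak : ‖a k‖ = (t k / ρ k) * (‖z - (ρ k:ℂ)‖ / ‖z - (t k:ℂ)‖) :=
        aux_norm hρk htk hzt
      rw [hak]
      have hR0 : (0:ℝ) ≤ ‖z - (ρ k:ℂ)‖ / ‖z - (t k:ℂ)‖ := by positivity
      constructor
      · apply mul_le_mul_of_nonneg_right _ hR0
        rw [le_div_iff₀ hρk]
        linarith [htlb k hk]
      · apply mul_le_mul_of_nonneg_right _ hR0
        rw [div_le_iff₀ hρk]
        linarith [htub k hk]
    have hGD : 0.1 ≤ ‖∏ j ∈ Finset.Ioc k (k+1), a j‖ ∧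
        ‖∏ j ∈ Finset.Ioc k (k+1), a j‖ ≤ 42 := by
      rw [Nat.Ioc_succ_singleton, Finset.prod_singleton]
      have htk1 : 0 < t (k+1) := htpos (k+1) (by omega)
      have htl := htlb (k+1) (by omega)
      have htu := htub (k+1) (by omega)
      have hXlb : 0.25 * ρ (k+1) ≤ ‖z - (ρ (k+1):ℂ)‖ :=
        le_trans (by linarith) (hge (ρ (k+1)) hρk1.le)
      have hXub : ‖z - (ρ (k+1):ℂ)‖ ≤ 1.75 * ρ (k+1) :=
        le_trans (hle _ hρk1.le) (by linarith)
      have hYlb : 0.05 * ρ (k+1) ≤ ‖z - (t (k+1):ℂ)‖ :=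
        le_trans (by linarith) (hge (t (k+1)) htk1.le)
      have hYub : ‖z - (t (k+1):ℂ)‖ ≤ 1.95 * ρ (k+1) :=
        le_trans (hle _ htk1.le) (by linarith)
      have hYpos : 0 < ‖z - (t (k+1):ℂ)‖ := by nlinarith
      have hak : ‖a (k+1)‖ = (t (k+1) / ρ (k+1)) * (‖z - (ρ (k+1):ℂ)‖ / ‖z - (t (k+1):ℂ)‖) :=
        aux_norm hρk1 htk1 (hzU (k+1) (by omega))
      rw [hak]
      have htρl : (0.8:ℝ) ≤ t (k+1) / ρ (k+1) := by rw [le_div_iff₀ hρk1]; linarith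
      have htρu : t (k+1) / ρ (k+1) ≤ 1.2 := by rw [div_le_iff₀ hρk1]; linarith
      constructor
      · have hr : (1/8:ℝ) ≤ ‖z - (ρ (k+1):ℂ)‖ / ‖z - (t (k+1):ℂ)‖ := by
          rw [le_div_iff₀ hYpos]
          nlinarith
        have := mul_le_mul htρl hr (by norm_num) (le_trans (by norm_num) htρl)
        linarith
      · have hr : ‖z - (ρ (k+1):ℂ)‖ / ‖z - (t (k+1):ℂ)‖ ≤ 35 := by
          rw [div_le_iff₀ hYpos]
          nlinarith
        have := mul_le_mul htρu hr (by positivity) (by norm_num)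
        linarith
    have hGE : Real.exp (-(1.44:ℝ)) ≤ ‖∏ j ∈ Finset.Ioc (k+1) N, a j‖ ∧
        ‖∏ j ∈ Finset.Ioc (k+1) N, a j‖ ≤ Real.exp ((0.72:ℝ)) := by
      have hεb : ∀ j ∈ Finset.Ioc (k+1) N,
          ‖a j - 1‖ ≤ 0.36 * (1/2:ℝ)^(j-(k+1)) := by
        intro j hj
        obtain ⟨hjk, hjN⟩ := Finset.mem_Ioc.mp hj
        have hj1 : 1 ≤ j := by omega
        have hρj := hρpos j hj1
        have htj := htpos j hj1
        have hpj : 2^(j-(k+1)) * ρ (k+1) ≤ ρ j := hgrow (k+1) (by omega) j (by omega)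
        have hpwpos : (0:ℝ) < 2^(j-(k+1)) := by positivity
        have hmm : ((1:ℝ)/2)^(j-(k+1)) * 2^(j-(k+1)) = 1 := by
          rw [← mul_pow]; norm_num
        have hhalf : ρ (k+1) ≤ (1/2:ℝ)^(j-(k+1)) * ρ j := by
          calc ρ (k+1) = ((1/2:ℝ)^(j-(k+1)) * 2^(j-(k+1))) * ρ (k+1) := by
                rw [hmm, one_mul]
            _ = (1/2:ℝ)^(j-(k+1)) * (2^(j-(k+1)) * ρ (k+1)) := by ring
            _ ≤ (1/2:ℝ)^(j-(k+1)) * ρ j := by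
                apply mul_le_mul_of_nonneg_left hpj (by positivity)
        have hponele : ((1:ℝ)/2)^(j-(k+1)) ≤ 1/2 := by
          calc ((1:ℝ)/2)^(j-(k+1)) ≤ (1/2:ℝ)^1 :=
                pow_le_pow_of_le_one (by norm_num) (by norm_num) (by omega)
            _ = 1/2 := pow_one _
        have hρk1j : ρ (k+1) ≤ 0.5 * ρ j := by nlinarith
        have hYlb : 0.425 * ρ j ≤ ‖z - (t j:ℂ)‖ := by
          have h1 := hge (t j) htj.le
          have h2 := htlb j hj1
          linarith
        have hYpos : 0 < ‖z - (t j:ℂ)‖ := by nlinarith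
        have heq := aux_sub_one_norm hρj htj (hzU j hj1)
        rw [show a j - 1 = (1 - z/(ρ j:ℂ))/(1 - z/(t j:ℂ)) - 1 from rfl, heq]
        rw [div_le_iff₀ (mul_pos hρj hYpos)]
        have habs : |ρ j - t j| ≤ 0.2 * ρ j := by
          rw [abs_sub_comm]; exact ht j hj1
        have h6 : ‖z‖ * |ρ j - t j| ≤ (0.75 * ρ (k+1)) * (0.2 * ρ j) :=
          mul_le_mul hzub habs (abs_nonneg _) (by nlinarith)
        have h7 : (0.75 * ρ (k+1)) * (0.2 * ρ j) ≤
            0.15 * ((1/2:ℝ)^(j-(k+1)) * ρ j) * ρ j := by nlinarith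
        have h8 : 0.36 * (1/2:ℝ)^(j-(k+1)) * (ρ j * (0.425 * ρ j)) ≤
            0.36 * (1/2:ℝ)^(j-(k+1)) * (ρ j * ‖z - (t j:ℂ)‖) := by
          apply mul_le_mul_of_nonneg_left _ (by positivity)
          exact mul_le_mul_of_nonneg_left hYlb hρj.le
        nlinarith [h6, h7, h8, mul_pos (mul_pos (by norm_num : (0:ℝ) < 0.003)
          (pow_pos (by norm_num : (0:ℝ) < 1/2) (j-(k+1)))) (mul_pos hρj hρj)]
      have hεnn : ∀ j ∈ Finset.Ioc (k+1) N, (0:ℝ) ≤ ‖a j - 1‖ :=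
        fun j hj => norm_nonneg _
      have hεhalf : ∀ j ∈ Finset.Ioc (k+1) N, 0 ≤ ‖a j - 1‖ ∧ ‖a j - 1‖ ≤ 1/2 := by
        intro j hj
        have h1 := hεb j hj
        have hp : ((1:ℝ)/2)^(j-(k+1)) ≤ 1 := pow_le_one₀ (by norm_num) (by norm_num)
        exact ⟨norm_nonneg _, by nlinarith⟩
      have hsumε : ∑ j ∈ Finset.Ioc (k+1) N, ‖a j - 1‖ ≤ 0.72 := by
        calc ∑ j ∈ Finset.Ioc (k+1) N, ‖a j - 1‖
            ≤ ∑ j ∈ Finset.Ioc (k+1) N, 0.36 * (1/2:ℝ)^(j-(k+1)) :=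
              Finset.sum_le_sum hεb
          _ = 0.36 * ∑ j ∈ Finset.Ioc (k+1) N, (1/2:ℝ)^(j-(k+1)) := by
              rw [Finset.mul_sum]
          _ ≤ 0.36 * 2 := by
              apply mul_le_mul_of_nonneg_left _ (by norm_num)
              exact sum_pow_half _ _ (fun x hx y hy hxy => by
                simp only [Finset.coe_Ioc, Set.mem_Ioc] at hx hy
                omega)
          _ = 0.72 := by norm_num
      have hlo : ∀ j ∈ Finset.Ioc (k+1) N, 1 - ‖a j - 1‖ ≤ ‖a j‖ := by
        intro j hj
        have h1 : ‖(1:ℂ)‖ ≤ ‖(1:ℂ) - a j‖ + ‖a j‖ := by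
          calc ‖(1:ℂ)‖ = ‖((1:ℂ) - a j) + a j‖ := by ring_nf
            _ ≤ ‖(1:ℂ) - a j‖ + ‖a j‖ := norm_add_le _ _
        rw [norm_one, norm_sub_rev] at h1
        linarith
      have hup : ∀ j ∈ Finset.Ioc (k+1) N, ‖a j‖ ≤ 1 + ‖a j - 1‖ := by
        intro j hj
        calc ‖a j‖ = ‖(a j - 1) + 1‖ := by ring_nf
          _ ≤ ‖a j - 1‖ + ‖(1:ℂ)‖ := norm_add_le _ _
          _ = 1 + ‖a j - 1‖ := by rw [norm_one]; ring
      rw [norm_prod]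
      constructor
      · calc Real.exp (-(1.44:ℝ))
            ≤ Real.exp (-(2 * ∑ j ∈ Finset.Ioc (k+1) N, ‖a j - 1‖)) := by
              apply Real.exp_le_exp.mpr
              linarith
          _ ≤ ∏ j ∈ Finset.Ioc (k+1) N, (1 - ‖a j - 1‖) :=
              prod_one_sub_ge _ _ hεhalf
          _ ≤ ∏ j ∈ Finset.Ioc (k+1) N, ‖a j‖ :=
              Finset.prod_le_prod (fun j hj => by linarith [(hεhalf j hj).2]) hlo
      · calc ∏ j ∈ Finset.Ioc (k+1) N, ‖a j‖
            ≤ ∏ j ∈ Finset.Ioc (k+1) N, (1 + ‖a j - 1‖) :=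
              Finset.prod_le_prod (fun j hj => norm_nonneg _) hup
          _ ≤ Real.exp (∑ j ∈ Finset.Ioc (k+1) N, ‖a j - 1‖) :=
              prod_one_add_le_exp _ _ hεnn
          _ ≤ Real.exp ((0.72:ℝ)) := Real.exp_le_exp.mpr hsumε

    have hnorm5 : ‖P N z‖ =
        ‖∏ j ∈ Finset.Ioc 0 (k-2), a j‖ * ‖∏ j ∈ Finset.Ioc (k-2) (k-1), a j‖ *
        ‖∏ j ∈ Finset.Ioc (k-1) k, a j‖ * ‖∏ j ∈ Finset.Ioc k (k+1), a j‖ *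
        ‖∏ j ∈ Finset.Ioc (k+1) N, a j‖ := by
      rw [hPNz, hsplit, norm_mul, norm_mul, norm_mul, norm_mul]
    have hA0 : (0:ℝ) ≤ ‖∏ j ∈ Finset.Ioc 0 (k-2), a j‖ := norm_nonneg _
    have hB0 : (0:ℝ) ≤ ‖∏ j ∈ Finset.Ioc (k-2) (k-1), a j‖ := norm_nonneg _
    have hC0 : (0:ℝ) ≤ ‖∏ j ∈ Finset.Ioc (k-1) k, a j‖ := norm_nonneg _
    have hD0 : (0:ℝ) ≤ ‖∏ j ∈ Finset.Ioc k (k+1), a j‖ := norm_nonneg _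
    have hE0 : (0:ℝ) ≤ ‖∏ j ∈ Finset.Ioc (k+1) N, a j‖ := norm_nonneg _
    have hR0 : (0:ℝ) ≤ ‖z - (ρ k:ℂ)‖ / ‖z - (t k:ℂ)‖ := by positivity
    constructor
    · have h1 := mul_le_mul hGA.1 hGB.1 (by norm_num) hA0
      have h2 := mul_le_mul h1 hGC.1 (by positivity) (mul_nonneg hA0 hB0)
      have h3 := mul_le_mul h2 hGD.1 (by norm_num)
        (mul_nonneg (mul_nonneg hA0 hB0) hC0)
      have h4 := mul_le_mul h3 hGE.1 (by positivity)
        (mul_nonneg (mul_nonneg (mul_nonneg hA0 hB0) hC0) hD0)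
      rw [hnorm5]
      calc 0.001 * Real.exp (-(4/3:ℝ)) * 0.1 * 0.8 * 0.1 * Real.exp (-(1.44:ℝ)) *
            (‖z - (ρ k:ℂ)‖ / ‖z - (t k:ℂ)‖)
          = 0.001 * Real.exp (-(4/3:ℝ)) * 0.1 * (0.8 * (‖z - (ρ k:ℂ)‖ / ‖z - (t k:ℂ)‖)) *
            0.1 * Real.exp (-(1.44:ℝ)) := by ring
        _ ≤ _ := h4
    · have h1 := mul_le_mul hGA.2 hGB.2 hB0 (by positivity)
      have h2 := mul_le_mul h1 hGC.2 hC0 (by positivity)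
      have h3 := mul_le_mul h2 hGD.2 hD0 (by positivity)
      have h4 := mul_le_mul h3 hGE.2 hE0 (by positivity)
      rw [hnorm5]
      calc ‖∏ j ∈ Finset.Ioc 0 (k-2), a j‖ * ‖∏ j ∈ Finset.Ioc (k-2) (k-1), a j‖ *
            ‖∏ j ∈ Finset.Ioc (k-1) k, a j‖ * ‖∏ j ∈ Finset.Ioc k (k+1), a j‖ *
            ‖∏ j ∈ Finset.Ioc (k+1) N, a j‖ ≤
            1000 * Real.exp ((2/3:ℝ)) * 2 * (1.2 * (‖z - (ρ k:ℂ)‖ / ‖z - (t k:ℂ)‖)) * 42 *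
            Real.exp ((0.72:ℝ)) := h4
        _ = 1000 * Real.exp ((2/3:ℝ)) * 2 * 1.2 * 42 * Real.exp ((0.72:ℝ)) *
            (‖z - (ρ k:ℂ)‖ / ‖z - (t k:ℂ)‖) := by ring
  have htz : Filter.Tendsto (fun N => P N z) atTop (nhds (m z)) := hconv.tendsto_at hzU
  have hnt : Filter.Tendsto (fun N => ‖P N z‖) atTop (nhds ‖m z‖) := htz.norm
  constructor
  · exact ge_of_tendsto hnt (Filter.eventually_atTop.mpr ⟨k+1, fun N hN => (hPbound N hN).1⟩)
  · exact le_of_tendsto hnt (Filter.eventually_atTop.mpr ⟨k+1, fun N hN => (hPbound N hN).2⟩)
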